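/- Exact decomposition of expected generalization error for averaged models with Bregman loss: Let F : ℝ^d → ℝ be continuously differentiable and strictly convex, and take the loss ℓ(w, z) = D_F(w, z) where D_F(p, q) = F(p) − F(q) − ⟨∇F(q), p − q⟩ is the Bregman divergence. Let S_1, ..., S_K be independent datasets, each consisting of n i.i.d. samples from a probability measure π on ℝ^d, let W_k = A_k(S_k) ∈ ℝ^d for measurable algorithms A_k, and let A(S) = (1/K) Σ_{k=1}^K W_k on the combined dataset S of all nK points. Then, assuming all expectations involved are finite, E_{S∼π^{nK}}[Δ_A(S)] = (1/K²) Σ_{k=1}^K E_{S_k∼π^n}[Δ_{A_k}(S_k)]. -/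

import Mathlib

open MeasureTheory
open scoped RealInnerProductSpace

section Helpers

lemma pi_map_eval {ι : Type*} [Fintype ι] {X : Type*} [MeasurableSpace X]
    (ν : Measure X) [IsProbabilityMeasure ν] (i : ι) :
    (Measure.pi fun _ : ι => ν).map (Function.eval i) = ν := by
  classical
  ext s hs
  rw [Measure.map_apply (measurable_pi_apply i) hs]
  have h : Function.eval i ⁻¹' s =
      Set.pi Set.univ (Function.update (fun _ : ι => (Set.univ : Set X)) i s) := by
    ext x
    simp only [Set.mem_preimage, Set.mem_pi, Set.mem_univ, forall_true_left, Function.eval]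
    constructor
    · intro hx j
      rcases eq_or_ne j i with rfl | hj
      · simpa using hx
      · simp [Function.update_of_ne hj]
    · intro hx
      simpa using hx i
  rw [h, Measure.pi_pi]
  rw [Finset.prod_eq_single i (fun j _ hj => by simp [Function.update_of_ne hj]) (by simp)]
  simp

lemma integrable_eval {ι : Type*} [Fintype ι] {X : Type*} [MeasurableSpace X]
    {ν : Measure X} [IsProbabilityMeasure ν] (i : ι) {G : Type*} [NormedAddCommGroup G]
    {f : X → G} (hf : Integrable f ν) :
    Integrable (fun x : ι → X => f (x i)) (Measure.pi fun _ : ι => ν) := by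
  have h1 : AEStronglyMeasurable f ((Measure.pi fun _ : ι => ν).map (Function.eval i)) := by
    rw [pi_map_eval]; exact hf.1
  have h2 : Integrable f ((Measure.pi fun _ : ι => ν).map (Function.eval i)) := by
    rw [pi_map_eval]; exact hf
  exact (integrable_map_measure h1 (measurable_pi_apply i).aemeasurable).mp h2

lemma integral_eval {ι : Type*} [Fintype ι] {X : Type*} [MeasurableSpace X]
    (ν : Measure X) [IsProbabilityMeasure ν] (i : ι) {G : Type*} [NormedAddCommGroup G]
    [NormedSpace ℝ G] {f : X → G} (hf : AEStronglyMeasurable f ν) :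
    ∫ x : ι → X, f (x i) ∂(Measure.pi fun _ : ι => ν) = ∫ y, f y ∂ν := by
  have h1 : AEStronglyMeasurable f ((Measure.pi fun _ : ι => ν).map (Function.eval i)) := by
    rw [pi_map_eval]; exact hf
  rw [← integral_map (measurable_pi_apply i).aemeasurable h1, pi_map_eval]

lemma two_coord_aux {ι : Type*} [Fintype ι] [DecidableEq ι] {X : Type*} {k j : ι}
    (hkj : k ≠ j) (f g : X → ℝ) (x : ι → X) :
    (∏ m : ι, (if m = k then f else if m = j then g else fun _ => (1:ℝ)) (x m))
      = f (x k) * g (x j) := by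
  rw [← Finset.mul_prod_erase Finset.univ _ (Finset.mem_univ k)]
  rw [← Finset.mul_prod_erase (Finset.univ.erase k) _
    (Finset.mem_erase.mpr ⟨fun h => hkj h.symm, Finset.mem_univ j⟩)]
  rw [if_pos rfl, if_neg (fun h => hkj h.symm), if_pos rfl]
  rw [Finset.prod_eq_one (fun m hm => by
    simp only [Finset.mem_erase] at hm
    rw [if_neg hm.2.1, if_neg hm.1])]
  ring

lemma pi_integrable_mul {ι : Type*} [Fintype ι] {X : Type*} [MeasurableSpace X]
    (ν : Measure X) [IsProbabilityMeasure ν] {k j : ι} (hkj : k ≠ j) {f g : X → ℝ}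
    (hf : Integrable f ν) (hg : Integrable g ν) :
    Integrable (fun x : ι → X => f (x k) * g (x j)) (Measure.pi fun _ : ι => ν) := by
  classical
  letI : MeasureSpace X := ⟨ν⟩
  haveI : IsProbabilityMeasure (volume : Measure X) := ‹IsProbabilityMeasure ν›
  have h : Integrable (fun x : ι → X =>
      ∏ m : ι, (if m = k then f else if m = j then g else fun _ => (1:ℝ)) (x m)) := by
    apply Integrable.fintype_prod
    intro m
    rcases eq_or_ne m k with rfl | h1
    · have hf' : Integrable f (volume : Measure X) := hf
      simpa using hf'
    rcases eq_or_ne m j with rfl | h2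
    · have hg' : Integrable g (volume : Measure X) := hg
      simpa [if_neg h1] using hg'
    · simp only [if_neg h1, if_neg h2]
      exact integrable_const 1
  simp_rw [two_coord_aux hkj] at h
  exact h

lemma pi_integral_mul {ι : Type*} [Fintype ι] {X : Type*} [MeasurableSpace X]
    (ν : Measure X) [IsProbabilityMeasure ν] {k j : ι} (hkj : k ≠ j) (f g : X → ℝ) :
    ∫ x : ι → X, f (x k) * g (x j) ∂(Measure.pi fun _ : ι => ν)
      = (∫ y, f y ∂ν) * (∫ y, g y ∂ν) := by
  classical
  letI : MeasureSpace X := ⟨ν⟩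
  haveI : IsProbabilityMeasure (volume : Measure X) := ‹IsProbabilityMeasure ν›
  have h := integral_fintype_prod_eq_prod (𝕜 := ℝ) (E := fun _ : ι => X) (μ := fun _ => ν)
    (f := fun m => (if m = k then f else if m = j then g else fun _ => (1:ℝ)))
  simp_rw [two_coord_aux hkj] at h
  rw [h]
  rw [← Finset.mul_prod_erase Finset.univ _ (Finset.mem_univ k),
    ← Finset.mul_prod_erase (Finset.univ.erase k) _
      (Finset.mem_erase.mpr ⟨fun h => hkj h.symm, Finset.mem_univ j⟩),
    if_pos rfl, if_neg (fun h => hkj h.symm), if_pos rfl,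
    Finset.prod_eq_one (fun m hm => by
      simp only [Finset.mem_erase] at hm
      rw [if_neg hm.2.1, if_neg hm.1]
      simp)]
  rw [mul_one]

lemma coord_integrable {X : Type*} [MeasurableSpace X] {ν : Measure X} {d : ℕ}
    {Φ : X → EuclideanSpace ℝ (Fin d)} (hΦ : Integrable Φ ν) (t : Fin d) :
    Integrable (fun y => Φ y t) ν :=
  (EuclideanSpace.proj (𝕜 := ℝ) t).integrable_comp hΦ

lemma coord_integral {X : Type*} [MeasurableSpace X] {ν : Measure X} {d : ℕ}
    {Φ : X → EuclideanSpace ℝ (Fin d)} (hΦ : Integrable Φ ν) (t : Fin d) :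
    (∫ y, Φ y ∂ν) t = ∫ y, Φ y t ∂ν :=
  ((EuclideanSpace.proj (𝕜 := ℝ) t).integral_comp_comm hΦ).symm

lemma pi_integrable_inner {ι : Type*} [Fintype ι] {X : Type*} [MeasurableSpace X]
    (ν : Measure X) [IsProbabilityMeasure ν] {d : ℕ} {k j : ι} (hkj : k ≠ j)
    {Φ Ψ : X → EuclideanSpace ℝ (Fin d)} (hΦ : Integrable Φ ν) (hΨ : Integrable Ψ ν) :
    Integrable (fun x : ι → X => ⟪Φ (x k), Ψ (x j)⟫) (Measure.pi fun _ : ι => ν) := by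
  have h : ∀ x : ι → X, ⟪Φ (x k), Ψ (x j)⟫ = ∑ t : Fin d, Φ (x k) t * Ψ (x j) t := by
    intro x
    simp [PiLp.inner_apply, RCLike.inner_apply, conj_trivial]
    exact Finset.sum_congr rfl fun _ _ => mul_comm _ _
  simp_rw [h]
  exact integrable_finset_sum _ fun t _ =>
    pi_integrable_mul ν hkj (coord_integrable hΦ t) (coord_integrable hΨ t)

lemma pi_integral_inner {ι : Type*} [Fintype ι] {X : Type*} [MeasurableSpace X]
    (ν : Measure X) [IsProbabilityMeasure ν] {d : ℕ} {k j : ι} (hkj : k ≠ j)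
    {Φ Ψ : X → EuclideanSpace ℝ (Fin d)} (hΦ : Integrable Φ ν) (hΨ : Integrable Ψ ν) :
    ∫ x : ι → X, ⟪Φ (x k), Ψ (x j)⟫ ∂(Measure.pi fun _ : ι => ν)
      = ⟪∫ y, Φ y ∂ν, ∫ y, Ψ y ∂ν⟫ := by
  have h : ∀ x : ι → X, ⟪Φ (x k), Ψ (x j)⟫ = ∑ t : Fin d, Φ (x k) t * Ψ (x j) t := by
    intro x
    simp [PiLp.inner_apply, RCLike.inner_apply, conj_trivial]
    exact Finset.sum_congr rfl fun _ _ => mul_comm _ _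
  simp_rw [h]
  rw [integral_finset_sum _ (fun t (_ : t ∈ Finset.univ) =>
    pi_integrable_mul ν hkj (coord_integrable hΦ t) (coord_integrable hΨ t))]
  have h2 : ⟪∫ y, Φ y ∂ν, ∫ y, Ψ y ∂ν⟫
      = ∑ t : Fin d, (∫ y, Φ y ∂ν) t * (∫ y, Ψ y ∂ν) t := by
    simp [PiLp.inner_apply, RCLike.inner_apply, conj_trivial]
    exact Finset.sum_congr rfl fun _ _ => mul_comm _ _
  rw [h2]
  refine Finset.sum_congr rfl fun t _ => ?_
  rw [pi_integral_mul ν hkj (fun y => Φ y t) (fun y => Ψ y t), coord_integral hΦ t, coord_integral hΨ t]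

lemma integral_inner_left {X : Type*} [MeasurableSpace X] {ν : Measure X} {d : ℕ}
    {f : X → EuclideanSpace ℝ (Fin d)} (hf : Integrable f ν) (w : EuclideanSpace ℝ (Fin d)) :
    ∫ x, ⟪f x, w⟫ ∂ν = ⟪∫ x, f x ∂ν, w⟫ := by
  calc ∫ x, ⟪f x, w⟫ ∂ν = ∫ x, ⟪w, f x⟫ ∂ν := by
        congr 1; ext x; exact real_inner_comm _ _
    _ = ⟪w, ∫ x, f x ∂ν⟫ := integral_inner hf w
    _ = ⟪∫ x, f x ∂ν, w⟫ := real_inner_comm _ _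

end Helpers


set_option maxHeartbeats 1000000

/-- **Exact decomposition of the expected generalization error for averaged models with a
Bregman-divergence loss** (Theorem 5(ii) of the paper, equality part).
With `ℓ(w, z) = D_F(w, z) = F(w) − F(z) − ⟪∇F(z), w − z⟫` for `F` continuously differentiable
and strictly convex, `S_1, …, S_K` independent datasets of `n` i.i.d. samples from `π`,
`W_k = A_k(S_k)` and `A(S) = (1/K) ∑_k W_k`, we have
`E_{S∼π^{nK}}[Δ_A(S)] = (1/K²) ∑_k E_{S_k∼π^n}[Δ_{A_k}(S_k)]`. -/
theorem bregman_aggregation_exact_decomposition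
    (d n K : ℕ) (hn : 0 < n) (hK : 0 < K)
    (π : Measure (EuclideanSpace ℝ (Fin d))) [IsProbabilityMeasure π]
    (F : EuclideanSpace ℝ (Fin d) → ℝ)
    (hF : ContDiff ℝ 1 F) (hFconv : StrictConvexOn ℝ Set.univ F)
    (ℓ : EuclideanSpace ℝ (Fin d) → EuclideanSpace ℝ (Fin d) → ℝ)
    (hℓ : ℓ = fun p q => F p - F q - ⟪gradient F q, p - q⟫)
    (A : Fin K → (Fin n → EuclideanSpace ℝ (Fin d)) → EuclideanSpace ℝ (Fin d))
    (hA : ∀ k, Measurable (A k))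
    (Agg : (Fin K → Fin n → EuclideanSpace ℝ (Fin d)) → EuclideanSpace ℝ (Fin d))
    (hAgg : Agg = fun s => (K : ℝ)⁻¹ • ∑ k : Fin K, A k (s k))
    -- all expectations involved are finite:
    (hint_pop : Integrable (fun p : (Fin K → Fin n → EuclideanSpace ℝ (Fin d)) ×
        EuclideanSpace ℝ (Fin d) => ℓ (Agg p.1) p.2)
      ((Measure.pi fun _ : Fin K => (Measure.pi fun _ : Fin n => π)).prod π))
    (hint_emp : ∀ (k : Fin K) (i : Fin n),
      Integrable (fun s : Fin K → Fin n → EuclideanSpace ℝ (Fin d) => ℓ (Agg s) (s k i))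
        (Measure.pi fun _ : Fin K => (Measure.pi fun _ : Fin n => π)))
    (hint_pop_node : ∀ k : Fin K,
      Integrable (fun p : (Fin n → EuclideanSpace ℝ (Fin d)) × EuclideanSpace ℝ (Fin d) =>
          ℓ (A k p.1) p.2)
        ((Measure.pi fun _ : Fin n => π).prod π))
    (hint_emp_node : ∀ (k : Fin K) (i : Fin n),
      Integrable (fun sk : Fin n → EuclideanSpace ℝ (Fin d) => ℓ (A k sk) (sk i))
        (Measure.pi fun _ : Fin n => π))
    (hint_F : Integrable (fun s : Fin K → Fin n → EuclideanSpace ℝ (Fin d) => F (Agg s))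
      (Measure.pi fun _ : Fin K => (Measure.pi fun _ : Fin n => π)))
    (hint_F_node : ∀ k : Fin K,
      Integrable (fun sk : Fin n → EuclideanSpace ℝ (Fin d) => F (A k sk))
        (Measure.pi fun _ : Fin n => π))
    (hint_A : ∀ k : Fin K, Integrable (A k) (Measure.pi fun _ : Fin n => π))
    (hint_grad : Integrable (fun z => gradient F z) π) :
    ∫ s, ((∫ z, ℓ (Agg s) z ∂π)
          - (1 / (n * K) : ℝ) * ∑ k : Fin K, ∑ i : Fin n, ℓ (Agg s) (s k i))
        ∂(Measure.pi fun _ : Fin K => (Measure.pi fun _ : Fin n => π))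
      = (1 / (K ^ 2) : ℝ) * ∑ k : Fin K,
          ∫ sk, ((∫ z, ℓ (A k sk) z ∂π) - (1 / n : ℝ) * ∑ i : Fin n, ℓ (A k sk) (sk i))
            ∂(Measure.pi fun _ : Fin n => π) := by
  classical
  set μn : Measure (Fin n → (EuclideanSpace ℝ (Fin d))) := Measure.pi fun _ : Fin n => π with hμn
  set μ : Measure (Fin K → Fin n → (EuclideanSpace ℝ (Fin d))) := Measure.pi fun _ : Fin K => μn with hμ
  haveI hPn : IsProbabilityMeasure μn := by rw [hμn]; infer_instance
  haveI hP : IsProbabilityMeasure μ := by rw [hμ]; infer_instance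
  have hgrad_cont : Continuous fun z : (EuclideanSpace ℝ (Fin d)) => gradient F z := by
    unfold gradient
    exact (InnerProductSpace.toDual ℝ (EuclideanSpace ℝ (Fin d))).symm.continuous.comp (hF.continuous_fderiv one_ne_zero)
  set g : (EuclideanSpace ℝ (Fin d)) := ∫ z, gradient F z ∂π with hg
  set h : (EuclideanSpace ℝ (Fin d)) → ℝ := fun z => ⟪gradient F z, z⟫ - F z with hh
  have hhc : Continuous h := (hgrad_cont.inner continuous_id).sub hF.continuous
  have hkey : ∀ w z, ℓ w z = F w + h z - ⟪gradient F z, w⟫ := by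
    intro w z
    simp only [hℓ, hh, inner_sub_right]
    ring
  -- integrability of h
  have hint_h : Integrable h π := by
    have k0 : Fin K := ⟨0, hK⟩
    have hae := (hint_pop_node k0).prod_right_ae
    have hne : (ae μn).NeBot := ae_neBot.mpr (IsProbabilityMeasure.ne_zero μn)
    obtain ⟨sk0, hsk0⟩ := hae.exists
    set w0 : (EuclideanSpace ℝ (Fin d)) := A k0 sk0
    have : Integrable (fun z => ℓ w0 z - F w0 + ⟪gradient F z, w0⟫) π :=
      (hsk0.sub (integrable_const (F w0))).add (hint_grad.inner_const w0)
    refine this.congr (Filter.Eventually.of_forall fun z => ?_)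
    simp only [hkey]
    ring
  set c : ℝ := ∫ z, h z ∂π with hc
  -- population risk formula
  have hpop : ∀ w, ∫ z, ℓ w z ∂π = F w + c - ⟪g, w⟫ := by
    intro w
    simp_rw [hkey]
    have h1 : Integrable (fun z => F w + h z) π := (integrable_const (F w)).add hint_h
    have h2 : Integrable (fun z => ⟪gradient F z, w⟫) π := hint_grad.inner_const w
    rw [integral_sub h1 h2, integral_add (integrable_const (F w)) hint_h, integral_const,
      integral_inner_left hint_grad w]
    rw [← hg]
    simp only [probReal_univ, one_smul]
    rfl
  -- basic integrable facts
  have hn' : (n : ℝ) ≠ 0 := Nat.cast_ne_zero.mpr hn.ne'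
  have hK' : (K : ℝ) ≠ 0 := Nat.cast_ne_zero.mpr hK.ne'
  have hW : ∀ k : Fin K, Integrable (fun s : Fin K → Fin n → (EuclideanSpace ℝ (Fin d)) => A k (s k)) μ :=
    fun k => integrable_eval k (hint_A k)
  have hAggInt : Integrable Agg μ := by
    rw [hAgg]
    exact (integrable_finset_sum _ fun k _ => hW k).smul ((K : ℝ)⁻¹)
  have hh_i : ∀ i : Fin n, Integrable (fun sk : Fin n → (EuclideanSpace ℝ (Fin d)) => h (sk i)) μn :=
    fun i => integrable_eval i hint_h
  have hh_ki : ∀ (k : Fin K) (i : Fin n), Integrable (fun s => h (s k i)) μ :=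
    fun k i => integrable_eval k (hh_i i)
  have hh_i_asm : ∀ i : Fin n, AEStronglyMeasurable (fun sk : Fin n → (EuclideanSpace ℝ (Fin d)) => h (sk i)) μn :=
    fun i => (hhc.comp (continuous_apply i)).aestronglyMeasurable
  have hint_h_ki : ∀ (k : Fin K) (i : Fin n), ∫ s, h (s k i) ∂μ = c := by
    intro k i
    rw [integral_eval μn k (hh_i_asm i), integral_eval π i hhc.aestronglyMeasurable]
  -- gradient marginals
  have hgrad_i : ∀ i : Fin n, Integrable (fun sk : Fin n → (EuclideanSpace ℝ (Fin d)) => gradient F (sk i)) μn :=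
    fun i => integrable_eval i hint_grad
  have hΦint : ∀ i : Fin n, Integrable (fun sk : Fin n → (EuclideanSpace ℝ (Fin d)) => gradient F (sk i) - g) μn :=
    fun i => (hgrad_i i).sub (integrable_const g)
  have hΦzero : ∀ i : Fin n, ∫ sk, (gradient F (sk i) - g) ∂μn = 0 := by
    intro i
    rw [integral_sub (hgrad_i i) (integrable_const g),
      integral_eval π i hgrad_cont.aestronglyMeasurable, integral_const]
    simp [hg]
  -- per-node inner-product terms
  have hnode_inner : ∀ (k : Fin K) (i : Fin n),
      Integrable (fun y : Fin n → (EuclideanSpace ℝ (Fin d)) => ⟪gradient F (y i), A k y⟫) μn := by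
    intro k i
    have : Integrable (fun y : Fin n → (EuclideanSpace ℝ (Fin d)) => F (A k y) + h (y i) - ℓ (A k y) (y i)) μn :=
      ((hint_F_node k).add (hh_i i)).sub (hint_emp_node k i)
    refine this.congr (Filter.Eventually.of_forall fun y => ?_)
    simp only [hkey]
    ring
  have hΘint : ∀ (k : Fin K) (i : Fin n),
      Integrable (fun y : Fin n → (EuclideanSpace ℝ (Fin d)) => ⟪gradient F (y i) - g, A k y⟫) μn := by
    intro k i
    have : Integrable (fun y : Fin n → (EuclideanSpace ℝ (Fin d)) =>
        ⟪gradient F (y i), A k y⟫ - ⟪g, A k y⟫) μn :=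
      (hnode_inner k i).sub ((hint_A k).const_inner g)
    refine this.congr (Filter.Eventually.of_forall fun y => ?_)
    simp only [inner_sub_left]
  have hΘasm : ∀ (k : Fin K) (i : Fin n),
      AEStronglyMeasurable (fun y : Fin n → (EuclideanSpace ℝ (Fin d)) => ⟪gradient F (y i) - g, A k y⟫) μn := by
    intro k i
    exact (((hgrad_cont.measurable.comp (measurable_pi_apply i)).sub measurable_const).inner
      (hA k)).aestronglyMeasurable
  -- aggregated inner-product terms
  have hinner_ki : ∀ (k : Fin K) (i : Fin n),
      Integrable (fun s => ⟪gradient F (s k i), Agg s⟫) μ := by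
    intro k i
    have : Integrable (fun s => F (Agg s) + h (s k i) - ℓ (Agg s) (s k i)) μ :=
      (hint_F.add (hh_ki k i)).sub (hint_emp k i)
    refine this.congr (Filter.Eventually.of_forall fun s => ?_)
    simp only [hkey]
    ring
  have hterm_ki : ∀ (k : Fin K) (i : Fin n),
      Integrable (fun s => ⟪gradient F (s k i) - g, Agg s⟫) μ := by
    intro k i
    have : Integrable (fun s => ⟪gradient F (s k i), Agg s⟫ - ⟪g, Agg s⟫) μ :=
      (hinner_ki k i).sub (hAggInt.const_inner g)
    refine this.congr (Filter.Eventually.of_forall fun s => ?_)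
    simp only [inner_sub_left]
  -- the cross-term computation
  have hint_each : ∀ (k : Fin K) (i : Fin n) (jj : Fin K),
      Integrable (fun s => ⟪gradient F (s k i) - g, A jj (s jj)⟫) μ := by
    intro k i jj
    rcases eq_or_ne jj k with rfl | hne
    · exact integrable_eval jj (hΘint jj i)
    · exact pi_integrable_inner (ι := Fin K) (X := Fin n → EuclideanSpace ℝ (Fin d)) (d := d)
        (k := k) (j := jj) (Φ := fun sk => gradient F (sk i) - g) (Ψ := A jj) μn
        (Ne.symm hne) (hΦint i) (hint_A jj)
  have hcross : ∀ (k : Fin K) (i : Fin n),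
      ∫ s, ⟪gradient F (s k i) - g, Agg s⟫ ∂μ
        = (K : ℝ)⁻¹ * ∫ sk, ⟪gradient F (sk i) - g, A k sk⟫ ∂μn := by
    intro k i
    have expand : ∀ s : Fin K → Fin n → (EuclideanSpace ℝ (Fin d)), ⟪gradient F (s k i) - g, Agg s⟫
        = (K : ℝ)⁻¹ * ∑ jj : Fin K, ⟪gradient F (s k i) - g, A jj (s jj)⟫ := by
      intro s
      rw [hAgg]
      rw [real_inner_smul_right, inner_sum]
    simp_rw [expand]
    rw [integral_const_mul, integral_finset_sum _ fun jj _ => hint_each k i jj]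
    congr 1
    rw [Finset.sum_eq_single k]
    · exact integral_eval μn k (hΘasm k i)
    · intro jj _ hne
      rw [pi_integral_inner (ι := Fin K) (X := Fin n → EuclideanSpace ℝ (Fin d)) (d := d)
          (k := k) (j := jj) (Φ := fun sk => gradient F (sk i) - g) (Ψ := A jj) μn
          (Ne.symm hne) (hΦint i) (hint_A jj), hΦzero i, inner_zero_left]
    · intro hk
      exact absurd (Finset.mem_univ k) hk
  -- pointwise decomposition of the aggregated generalization error
  have hΔ : ∀ s : Fin K → Fin n → (EuclideanSpace ℝ (Fin d)),
      ((∫ z, ℓ (Agg s) z ∂π) - (1 / (n * K) : ℝ) * ∑ k : Fin K, ∑ i : Fin n, ℓ (Agg s) (s k i))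
        = (c - (1 / (n * K) : ℝ) * ∑ k : Fin K, ∑ i : Fin n, h (s k i))
          + (1 / (n * K) : ℝ) * ∑ k : Fin K, ∑ i : Fin n,
              ⟪gradient F (s k i) - g, Agg s⟫ := by
    intro s
    rw [hpop]
    simp only [hkey, inner_sub_left]
    simp only [Finset.sum_add_distrib, Finset.sum_sub_distrib, Finset.sum_const,
      Finset.card_univ, Fintype.card_fin, nsmul_eq_mul]
    field_simp
    ring
  -- node-level decomposition
  have hnode : ∀ k : Fin K,
      ∫ sk, ((∫ z, ℓ (A k sk) z ∂π) - (1 / n : ℝ) * ∑ i : Fin n, ℓ (A k sk) (sk i)) ∂μn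
        = (1 / n : ℝ) * ∑ i : Fin n, ∫ sk, ⟪gradient F (sk i) - g, A k sk⟫ ∂μn := by
    intro k
    have hΔn : ∀ sk : Fin n → (EuclideanSpace ℝ (Fin d)),
        ((∫ z, ℓ (A k sk) z ∂π) - (1 / n : ℝ) * ∑ i : Fin n, ℓ (A k sk) (sk i))
          = (c - (1 / n : ℝ) * ∑ i : Fin n, h (sk i))
            + (1 / n : ℝ) * ∑ i : Fin n, ⟪gradient F (sk i) - g, A k sk⟫ := by
      intro sk
      rw [hpop]
      simp only [hkey, inner_sub_left]
      simp only [Finset.sum_add_distrib, Finset.sum_sub_distrib, Finset.sum_const,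
        Finset.card_univ, Fintype.card_fin, nsmul_eq_mul]
      field_simp
      ring
    rw [integral_congr_ae (Filter.Eventually.of_forall hΔn)]
    have hint1 : Integrable (fun sk : Fin n → (EuclideanSpace ℝ (Fin d)) =>
        c - (1 / n : ℝ) * ∑ i : Fin n, h (sk i)) μn :=
      (integrable_const c).sub ((integrable_finset_sum _ fun i _ => hh_i i).const_mul _)
    have hint2 : Integrable (fun sk : Fin n → (EuclideanSpace ℝ (Fin d)) =>
        (1 / n : ℝ) * ∑ i : Fin n, ⟪gradient F (sk i) - g, A k sk⟫) μn :=
      ((integrable_finset_sum _ fun i _ => hΘint k i).const_mul _)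
    rw [integral_add hint1 hint2]
    have hz : ∫ sk, (c - (1 / n : ℝ) * ∑ i : Fin n, h (sk i)) ∂μn = 0 := by
      rw [integral_sub (integrable_const c)
        ((integrable_finset_sum _ fun i _ => hh_i i).const_mul _),
        integral_const, integral_const_mul,
        integral_finset_sum _ fun i _ => hh_i i]
      have : ∀ i : Fin n, i ∈ Finset.univ → ∫ sk, h (sk i) ∂μn = c := by
        intro i _
        rw [integral_eval π i hhc.aestronglyMeasurable]
      rw [Finset.sum_congr rfl this, Finset.sum_const, Finset.card_univ, Fintype.card_fin,
        nsmul_eq_mul]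
      simp
      field_simp
      ring
    rw [hz, zero_add, integral_const_mul,
      integral_finset_sum _ fun i _ => hΘint k i]
  -- Put everything together
  rw [integral_congr_ae (Filter.Eventually.of_forall hΔ)]
  have hint1 : Integrable (fun s : Fin K → Fin n → (EuclideanSpace ℝ (Fin d)) =>
      c - (1 / (n * K) : ℝ) * ∑ k : Fin K, ∑ i : Fin n, h (s k i)) μ :=
    (integrable_const c).sub ((integrable_finset_sum _ fun k _ =>
      integrable_finset_sum _ fun i _ => hh_ki k i).const_mul _)
  have hint2 : Integrable (fun s : Fin K → Fin n → (EuclideanSpace ℝ (Fin d)) =>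
      (1 / (n * K) : ℝ) * ∑ k : Fin K, ∑ i : Fin n,
        ⟪gradient F (s k i) - g, Agg s⟫) μ :=
    ((integrable_finset_sum _ fun k _ =>
      integrable_finset_sum _ fun i _ => hterm_ki k i).const_mul _)
  rw [integral_add hint1 hint2]
  have hz : ∫ s, (c - (1 / (n * K) : ℝ) * ∑ k : Fin K, ∑ i : Fin n, h (s k i)) ∂μ = 0 := by
    rw [integral_sub (integrable_const c) ((integrable_finset_sum _ fun k _ =>
        integrable_finset_sum _ fun i _ => hh_ki k i).const_mul _),
      integral_const, integral_const_mul,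
      integral_finset_sum _ fun k _ => integrable_finset_sum _ fun i _ => hh_ki k i]
    have : ∀ k : Fin K, k ∈ Finset.univ →
        (∫ s, (∑ i : Fin n, h (s k i)) ∂μ) = n * c := by
      intro k _
      rw [integral_finset_sum _ fun i _ => hh_ki k i]
      rw [Finset.sum_congr rfl fun i _ => hint_h_ki k i, Finset.sum_const, Finset.card_univ,
        Fintype.card_fin, nsmul_eq_mul]
    rw [Finset.sum_congr rfl this, Finset.sum_const, Finset.card_univ, Fintype.card_fin,
      nsmul_eq_mul]
    simp only [probReal_univ]
    field_simp
    ring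
  rw [hz, zero_add, integral_const_mul,
    integral_finset_sum _ fun k _ => integrable_finset_sum _ fun i _ => hterm_ki k i,
    Finset.sum_congr rfl fun k _ => integral_finset_sum _ fun i _ => hterm_ki k i,
    Finset.sum_congr rfl fun k _ => Finset.sum_congr rfl fun i _ => hcross k i,
    Finset.sum_congr rfl fun k _ => hnode k]
  simp only [Finset.mul_sum]
  refine Finset.sum_congr rfl fun k _ => Finset.sum_congr rfl fun i _ => ?_
  ring
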